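/- arXiv:2604.04785 — 5 statements merged into one kernel-verified Lean document; each statement's English description precedes it below -/
import Mathlib

section
/- For every integer k ≥ 1, every integer m ≥ k, and every nonnegative integer N, the truncated inclusion–exclusion sum satisfies |1{N ≥ k} − ∑_{s=k}^{m} (-1)^{s-k} C(s-1, k-1) C(N, s)| ≤ C(m, k-1) C(N, m+1). -/
open Finset

private def Sb (a b N : ℕ) : ℤ :=
  ∑ t ∈ Finset.range (b + 1),
    (-1 : ℤ) ^ t * ((a + t).choose a : ℤ) * (N.choose (a + 1 + t) : ℤ)

/-- Pascal's rule, cast to `ℤ`. -/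
private lemma pascalZ (n j : ℕ) :
    ((n + 1).choose (j + 1) : ℤ) = (n.choose j : ℤ) + (n.choose (j + 1) : ℤ) := by
  rw [Nat.choose_succ_succ']
  push_cast
  ring

private lemma Sb_succ (a b N : ℕ) :
    Sb a (b + 1) N
      = Sb a b N + (-1 : ℤ) ^ (b + 1) * ((a + b + 1).choose a : ℤ)
          * (N.choose (a + b + 2) : ℤ) := by
  unfold Sb
  rw [Finset.sum_range_succ, show a + (b + 1) = a + b + 1 by omega,
    show a + 1 + (b + 1) = a + b + 2 by omega]

private lemma alt_sum (n : ℕ) (j : ℕ) :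
    ∑ s ∈ Finset.range (j + 1), (-1 : ℤ) ^ s * ((n + 1).choose s : ℤ)
      = (-1 : ℤ) ^ j * (n.choose j : ℤ) := by
  induction j with
  | zero => simp
  | succ j ih =>
    rw [Finset.sum_range_succ, ih, pascalZ]
    ring

private lemma Sb_zero (n b : ℕ) :
    Sb 0 b (n + 1) = 1 - (-1 : ℤ) ^ (b + 1) * (n.choose (b + 1) : ℤ) := by
  have h := alt_sum n (b + 1)
  rw [Finset.sum_range_succ'] at h
  simp only [pow_zero, one_mul, Nat.choose_zero_right, Nat.cast_one] at h
  have hS : Sb 0 b (n + 1)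
      = ∑ t ∈ Finset.range (b + 1),
          (-1 : ℤ) ^ (t + 1) * ((n + 1).choose (t + 1) : ℤ) * (-1) := by
    unfold Sb
    apply Finset.sum_congr rfl
    intro t _
    rw [show (0 : ℕ) + t = t by omega, show 0 + 1 + t = t + 1 by omega,
      Nat.choose_zero_right]
    push_cast
    ring
  rw [hS, ← Finset.sum_mul, show (∑ t ∈ Finset.range (b + 1),
      (-1 : ℤ) ^ (t + 1) * ((n + 1).choose (t + 1) : ℤ))
      = (-1 : ℤ) ^ (b + 1) * (n.choose (b + 1) : ℤ) - 1 by linarith]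
  ring

private lemma Sb_rec (a b n : ℕ) :
    Sb (a + 1) b (n + 1)
      = Sb a b n + (-1 : ℤ) ^ b * ((a + 1 + b).choose (a + 1) : ℤ)
          * (n.choose (a + 2 + b) : ℤ) := by
  induction b with
  | zero =>
    have h : ((n + 1).choose (a + 2) : ℤ)
        = (n.choose (a + 1) : ℤ) + (n.choose (a + 2) : ℤ) := by
      rw [show a + 2 = (a + 1) + 1 by omega, pascalZ]
    unfold Sb
    simp only [zero_add, Finset.sum_range_one, pow_zero, one_mul, add_zero,
      Nat.choose_self, Nat.cast_one]
    rw [show a + 1 + 1 = a + 2 by omega, h, show a + 2 + 0 = a + 2 by omega,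
      show a + 1 + 0 = a + 1 by omega]
  | succ b ih =>
    rw [Sb_succ, Sb_succ, ih]
    have h1 : ((n + 1).choose (a + 1 + b + 2) : ℤ)
        = (n.choose (a + 1 + b + 1) : ℤ) + (n.choose (a + 1 + b + 2) : ℤ) := by
      rw [show a + 1 + b + 2 = (a + 1 + b + 1) + 1 by omega, pascalZ,
        show a + 1 + b + 1 + 1 = a + 1 + b + 2 by omega]
    have h2 : ((a + 1 + b + 1).choose (a + 1) : ℤ)
        = ((a + b + 1).choose a : ℤ) + ((a + b + 1).choose (a + 1) : ℤ) := by
      rw [show a + 1 + b + 1 = (a + b + 1) + 1 by omega, pascalZ]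
    rw [h1, show a + 1 + (b + 1) = a + 1 + b + 1 by omega,
      show a + 2 + (b + 1) = a + 1 + b + 2 by omega,
      show a + 1 + b + 1 = a + b + 2 by omega] at *
    rw [h2]
    ring

private lemma main_bound (a : ℕ) : ∀ b N : ℕ,
    0 ≤ (-1 : ℤ) ^ (b + 1) * ((if a + 1 ≤ N then (1 : ℤ) else 0) - Sb a b N) ∧
    (-1 : ℤ) ^ (b + 1) * ((if a + 1 ≤ N then (1 : ℤ) else 0) - Sb a b N)
      ≤ ((a + 1 + b).choose a : ℤ) * (N.choose (a + 2 + b) : ℤ) := by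
  induction a with
  | zero =>
    intro b N
    cases N with
    | zero =>
      have hS : Sb 0 b 0 = 0 := by
        unfold Sb
        apply Finset.sum_eq_zero
        intro t _
        simp [Nat.choose_eq_zero_of_lt (show 0 < 0 + 1 + t by omega)]
      rw [hS]
      constructor
      · simp
      · rw [if_neg (by omega)]
        simp
    | succ n =>
      rw [Sb_zero]
      have hpow : ((-1 : ℤ) ^ (b + 1)) * ((-1 : ℤ) ^ (b + 1)) = 1 := by
        rw [← pow_add]
        exact Even.neg_one_pow ⟨b + 1, by omega⟩
      have hval : (-1 : ℤ) ^ (b + 1) *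
          ((if 0 + 1 ≤ n + 1 then (1 : ℤ) else 0)
            - (1 - (-1 : ℤ) ^ (b + 1) * (n.choose (b + 1) : ℤ)))
          = (n.choose (b + 1) : ℤ) := by
        rw [if_pos (by omega)]
        linear_combination ((n.choose (b + 1) : ℤ)) * hpow
      rw [hval]
      constructor
      · positivity
      · have h : ((n + 1).choose (0 + 2 + b) : ℤ)
            = (n.choose (b + 1) : ℤ) + (n.choose (b + 2) : ℤ) := by
          rw [show 0 + 2 + b = (b + 1) + 1 by omega, pascalZ,
            show b + 1 + 1 = b + 2 by omega]
        rw [h, Nat.choose_zero_right]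
        have : (0 : ℤ) ≤ (n.choose (b + 2) : ℤ) := by positivity
        push_cast
        linarith
  | succ a ih =>
    intro b N
    cases N with
    | zero =>
      have hS : Sb (a + 1) b 0 = 0 := by
        unfold Sb
        apply Finset.sum_eq_zero
        intro t _
        simp [Nat.choose_eq_zero_of_lt (show 0 < a + 1 + 1 + t by omega)]
      rw [hS, if_neg (by omega)]
      constructor
      · simp
      · rw [Nat.choose_eq_zero_of_lt (show 0 < a + 1 + 2 + b by omega)]
        simp
    | succ n =>
      rw [Sb_rec]
      have hind : (if a + 1 + 1 ≤ n + 1 then (1 : ℤ) else 0)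
          = (if a + 1 ≤ n then (1 : ℤ) else 0) := by
        by_cases h : a + 1 ≤ n
        · rw [if_pos (by omega), if_pos h]
        · rw [if_neg (by omega), if_neg h]
      rw [hind]
      obtain ⟨h1, h2⟩ := ih b n
      have hpow : ((-1 : ℤ) ^ (b + 1)) * ((-1 : ℤ) ^ b) = -1 := by
        rw [← pow_add, show b + 1 + b = 2 * b + 1 by omega]
        exact Odd.neg_one_pow ⟨b, by omega⟩
      have key : (-1 : ℤ) ^ (b + 1) *
          ((if a + 1 ≤ n then (1 : ℤ) else 0)
            - (Sb a b n + (-1 : ℤ) ^ b * ((a + 1 + b).choose (a + 1) : ℤ)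
                * (n.choose (a + 2 + b) : ℤ)))
          = (-1 : ℤ) ^ (b + 1) * ((if a + 1 ≤ n then (1 : ℤ) else 0) - Sb a b n)
            + ((a + 1 + b).choose (a + 1) : ℤ) * (n.choose (a + 2 + b) : ℤ) := by
        linear_combination
          (-(((a + 1 + b).choose (a + 1) : ℤ) * (n.choose (a + 2 + b) : ℤ))) * hpow
      rw [key]
      constructor
      · have : (0 : ℤ) ≤ ((a + 1 + b).choose (a + 1) : ℤ)
            * (n.choose (a + 2 + b) : ℤ) := by positivity
        linarith
      · have hc1 : ((a + 1 + 1 + b).choose (a + 1) : ℤ)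
            = ((a + 1 + b).choose a : ℤ) + ((a + 1 + b).choose (a + 1) : ℤ) := by
          rw [show a + 1 + 1 + b = (a + 1 + b) + 1 by omega, pascalZ]
        have hc2 : ((n + 1).choose (a + 1 + 2 + b) : ℤ)
            = (n.choose (a + 2 + b) : ℤ) + (n.choose (a + 3 + b) : ℤ) := by
          rw [show a + 1 + 2 + b = (a + 2 + b) + 1 by omega, pascalZ,
            show a + 2 + b + 1 = a + 3 + b by omega]
        rw [hc1, hc2]
        have hnn1 : (0 : ℤ) ≤ (n.choose (a + 2 + b) : ℤ) := by positivity
        have hnn2 : (0 : ℤ) ≤ (n.choose (a + 3 + b) : ℤ) := by positivity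
        have hnn3 : (0 : ℤ) ≤ ((a + 1 + b).choose a : ℤ) := by positivity
        have hnn4 : (0 : ℤ) ≤ ((a + 1 + b).choose (a + 1) : ℤ) := by positivity
        nlinarith

/-- Generalized Bonferroni truncation bound: for `k ≥ 1`, `m ≥ k` and every
nonnegative integer `N`,
`|1{N ≥ k} − ∑_{s=k}^{m} (-1)^{s-k} C(s-1,k-1) C(N,s)| ≤ C(m,k-1) C(N,m+1)`. -/
theorem stmt_1 (k m : ℕ) (hk : 1 ≤ k) (hm : k ≤ m) (N : ℕ) :
    |(if k ≤ N then (1 : ℤ) else 0)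
        - ∑ s ∈ Finset.Icc k m,
            (-1 : ℤ) ^ (s - k) * ((s - 1).choose (k - 1) : ℤ) * (N.choose s : ℤ)|
      ≤ (m.choose (k - 1) : ℤ) * (N.choose (m + 1) : ℤ) := by
  obtain ⟨a, rfl⟩ : ∃ a, k = a + 1 := ⟨k - 1, by omega⟩
  obtain ⟨b, rfl⟩ : ∃ b, m = a + 1 + b := ⟨m - (a + 1), by omega⟩
  have hsum : (∑ s ∈ Finset.Icc (a + 1) (a + 1 + b),
      (-1 : ℤ) ^ (s - (a + 1)) * ((s - 1).choose (a + 1 - 1) : ℤ) * (N.choose s : ℤ))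
      = Sb a b N := by
    rw [← Finset.Ico_add_one_right_eq_Icc, Finset.sum_Ico_eq_sum_range,
      show a + 1 + b + 1 - (a + 1) = b + 1 by omega]
    apply Finset.sum_congr rfl
    intro t _
    rw [show a + 1 + t - (a + 1) = t by omega, show a + 1 + t - 1 = a + t by omega,
      show a + 1 - 1 = a by omega]
  rw [hsum]
  obtain ⟨h1, h2⟩ := main_bound a b N
  have habs : |(if a + 1 ≤ N then (1 : ℤ) else 0) - Sb a b N|
      = (-1 : ℤ) ^ (b + 1) * ((if a + 1 ≤ N then (1 : ℤ) else 0) - Sb a b N) := by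
    rw [← abs_of_nonneg h1, abs_mul, abs_pow, abs_neg, abs_one, one_pow, one_mul]
  rw [habs, show a + 1 + b + 1 = a + 2 + b by omega]
  rw [show a + 1 + 1 + b = a + 2 + b from by omega] at h2
  exact h2
end

section
/- Let p_1, …, p_d ∈ [0,1], let λ = ∑_{j=1}^d p_j, and let e_s = ∑_{|I|=s} ∏_{j∈I} p_j be the s-th elementary symmetric polynomial of p_1,…,p_d. Then for every integer s ≥ 2 there exists a constant C_s depending only on s such that |λ^s / s! − e_s| ≤ C_s λ^{s-2} ∑_{j=1}^d p_j². -/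
open Finset


lemma aux_biUnion_sum {ι α : Type*} [DecidableEq α] (s : Finset ι) (t : ι → Finset α)
    (f : α → ℝ) (hf : ∀ x, 0 ≤ f x) :
    ∑ x ∈ s.biUnion t, f x ≤ ∑ i ∈ s, ∑ x ∈ t i, f x := by
  classical
  induction s using Finset.induction with
  | empty => simp
  | @insert a s ha ih =>
    rw [Finset.biUnion_insert, Finset.sum_insert ha]
    have h1 : ∑ x ∈ t a ∪ s.biUnion t, f x ≤ ∑ x ∈ t a, f x + ∑ x ∈ s.biUnion t, f x := by
      have := Finset.sum_union_inter (s₁ := t a) (s₂ := s.biUnion t) (f := f)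
      have h2 : 0 ≤ ∑ x ∈ t a ∩ s.biUnion t, f x := Finset.sum_nonneg fun x _ => hf x
      linarith
    exact h1.trans (by linarith)

lemma aux_inj_sum (s d : ℕ) (p : Fin d → ℝ) :
    ∑ f ∈ (univ : Finset (Fin s → Fin d)).filter (fun f => Function.Injective f),
        ∏ i, p (f i)
      = (s.factorial : ℝ) * ∑ I ∈ powersetCard s (univ : Finset (Fin d)), ∏ j ∈ I, p j := by
  classical
  rw [eq_comm]
  have key : ∑ x ∈ (powersetCard s (univ : Finset (Fin d))) ×ˢ (univ : Finset (Equiv.Perm (Fin s))),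
      (∏ j ∈ x.1, p j)
      = ∑ f ∈ (univ : Finset (Fin s → Fin d)).filter (fun f => Function.Injective f),
        ∏ i, p (f i) := by
    refine Finset.sum_bij
      (i := fun x hx => fun i => x.1.orderEmbOfFin
        (Finset.mem_powersetCard_univ.mp (Finset.mem_product.mp hx).1) (x.2 i)) ?_ ?_ ?_ ?_
    · intro x hx
      simp only [Finset.mem_filter, Finset.mem_univ, true_and]
      exact (Finset.orderEmbOfFin _ _).injective.comp x.2.injective
    · rintro ⟨I, σ⟩ h1 ⟨J, τ⟩ h2 heq
      have hI := Finset.mem_powersetCard_univ.mp (Finset.mem_product.mp h1).1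
      have hJ := Finset.mem_powersetCard_univ.mp (Finset.mem_product.mp h2).1
      have hIJ : I = J := by
        have h1 : Set.range (fun i => I.orderEmbOfFin hI (σ i)) = ↑I := by
          rw [show (fun i => I.orderEmbOfFin hI (σ i)) = (I.orderEmbOfFin hI) ∘ σ from rfl,
            σ.surjective.range_comp, Finset.range_orderEmbOfFin]
        have h2 : Set.range (fun i => J.orderEmbOfFin hJ (τ i)) = ↑J := by
          rw [show (fun i => J.orderEmbOfFin hJ (τ i)) = (J.orderEmbOfFin hJ) ∘ τ from rfl,
            τ.surjective.range_comp, Finset.range_orderEmbOfFin]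
        apply Finset.coe_injective
        rw [← h1, ← h2]
        have : ∀ i, I.orderEmbOfFin hI (σ i) = J.orderEmbOfFin hJ (τ i) := fun i => congrFun heq i
        simp only [this]
      subst hIJ
      have hστ : σ = τ := by
        apply Equiv.coe_fn_injective
        funext i
        have := congrFun heq i
        exact (Finset.orderEmbOfFin I hI).injective (by simpa using this)
      simp [hστ]
    · intro f hf
      have hfi : Function.Injective f := (Finset.mem_filter.mp hf).2
      set I : Finset (Fin d) := Finset.image f univ with hIdef
      have hc : I.card = s := by
        rw [hIdef, Finset.card_image_of_injective _ hfi, Finset.card_univ, Fintype.card_fin]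
      have hmemI : ∀ i, f i ∈ I := fun i => Finset.mem_image_of_mem f (Finset.mem_univ i)
      set σ : Fin s → Fin s := fun i => (I.orderIsoOfFin hc).symm ⟨f i, hmemI i⟩ with hσdef
      have hσinj : Function.Injective σ := by
        intro i j hij
        have h2 : (⟨f i, hmemI i⟩ : {x // x ∈ I}) = ⟨f j, hmemI j⟩ := by
          have := congrArg (I.orderIsoOfFin hc) hij
          simpa [hσdef] using this
        exact hfi (congrArg Subtype.val h2)
      have hσbij := (Finite.injective_iff_bijective).mp hσinj
      refine ⟨⟨I, Equiv.ofBijective σ hσbij⟩, ?_, ?_⟩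
      · exact Finset.mem_product.mpr ⟨Finset.mem_powersetCard_univ.mpr hc, Finset.mem_univ _⟩
      · funext i
        have : I.orderEmbOfFin hc (σ i) = f i := by
          rw [← Finset.coe_orderIsoOfFin_apply]
          simp [hσdef]
        exact this
    · rintro ⟨I, σ⟩ hx
      have hI := Finset.mem_powersetCard_univ.mp (Finset.mem_product.mp hx).1
      show ∏ j ∈ I, p j = ∏ i, p (I.orderEmbOfFin hI (σ i))
      rw [Equiv.prod_comp σ (fun i => p (I.orderEmbOfFin hI i))]
      refine (Finset.prod_bij (fun i _ => I.orderEmbOfFin hI i) ?_ ?_ ?_ ?_).symm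
      · intro i _; exact Finset.orderEmbOfFin_mem I hI i
      · intro i _ j _ h; exact (Finset.orderEmbOfFin I hI).injective h
      · intro j hj
        have hjr : (j : Fin d) ∈ Set.range (I.orderEmbOfFin hI) := by
          rw [Finset.range_orderEmbOfFin]; exact hj
        obtain ⟨i, hi⟩ := hjr
        exact ⟨i, Finset.mem_univ i, hi⟩
      · intro i _; rfl
  rw [← key, Finset.sum_product]
  simp only [Finset.sum_const, Finset.card_univ, nsmul_eq_mul]
  rw [Fintype.card_perm, Fintype.card_fin, Finset.mul_sum]

lemma aux_pair (s d : ℕ) (p : Fin d → ℝ) (hp : ∀ j, 0 ≤ p j) (a b : Fin s) (hab : a ≠ b) :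
    ∑ f ∈ (univ : Finset (Fin s → Fin d)).filter (fun f => f a = f b), ∏ i, p (f i)
      ≤ (∑ j, p j ^ 2) * (∑ j, p j) ^ (s - 2) := by
  classical
  rcases Nat.eq_zero_or_pos d with rfl | hd
  · have : IsEmpty (Fin s → Fin 0) := ⟨fun f => (f a).elim0⟩
    simp
  set i₀ : Fin d := ⟨0, hd⟩ with hi₀
  set w : Fin s → Fin d → ℝ := fun i j => if i = a then p j ^ 2 else if i = b then 1 else p j
    with hw
  set t : Fin s → Finset (Fin d) := fun i => if i = b then {i₀} else univ with ht
  have hba : b ≠ a := hab.symm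
  have ha : a ∉ insert b ((univ : Finset (Fin s)) \ {a, b}) := by simp [hab]
  have hb : b ∉ (univ : Finset (Fin s)) \ {a, b} := by simp
  have huniv : (univ : Finset (Fin s)) = insert a (insert b (univ \ {a, b})) := by
    ext i
    by_cases h1 : i = a <;> by_cases h2 : i = b <;> simp [h1, h2]
  have hwnn : ∀ i j, 0 ≤ w i j := by
    intro i j
    rw [hw]
    dsimp only
    split_ifs
    · positivity
    · norm_num
    · exact hp j
  -- each term equals the weight of the updated function
  have key : ∀ f ∈ (univ : Finset (Fin s → Fin d)).filter (fun f => f a = f b),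
      (∏ i, p (f i)) = ∏ i, w i (Function.update f b i₀ i) := by
    intro f hf
    have hfab : f a = f b := by simpa using (Finset.mem_filter.mp hf).2
    rw [huniv, Finset.prod_insert ha, Finset.prod_insert hb, Finset.prod_insert ha,
      Finset.prod_insert hb]
    have hR : ∏ i ∈ univ \ {a, b}, p (f i)
        = ∏ i ∈ univ \ {a, b}, w i (Function.update f b i₀ i) := by
      refine Finset.prod_congr rfl fun i hi => ?_
      simp only [Finset.mem_sdiff, Finset.mem_insert, Finset.mem_singleton] at hi
      push_neg at hi
      rw [Function.update_of_ne hi.2.2, hw]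
      simp [hi.2.1, hi.2.2]
    rw [← hR, Function.update_of_ne hab, Function.update_self, hw]
    simp only [if_pos rfl, if_neg hba, if_true, eq_self_iff_true]
    rw [hfab]
    ring
  calc ∑ f ∈ (univ : Finset (Fin s → Fin d)).filter (fun f => f a = f b), ∏ i, p (f i)
      = ∑ f ∈ (univ : Finset (Fin s → Fin d)).filter (fun f => f a = f b),
          ∏ i, w i (Function.update f b i₀ i) := Finset.sum_congr rfl key
    _ = ∑ g ∈ ((univ : Finset (Fin s → Fin d)).filter (fun f => f a = f b)).image
          (fun f => Function.update f b i₀), ∏ i, w i (g i) := by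
        rw [Finset.sum_image]
        intro f hf f' hf' heq
        have h1 : f a = f b := by simpa using (Finset.mem_filter.mp hf).2
        have h2 : f' a = f' b := by simpa using (Finset.mem_filter.mp hf').2
        funext i
        by_cases hib : i = b
        · subst hib
          have := congrFun heq a
          beta_reduce at this; rw [Function.update_of_ne hab, Function.update_of_ne hab] at this
          rw [← h1, ← h2, this]
        · have := congrFun heq i
          beta_reduce at this; rwa [Function.update_of_ne hib, Function.update_of_ne hib] at this
    _ ≤ ∑ g ∈ Fintype.piFinset t, ∏ i, w i (g i) := by
        refine Finset.sum_le_sum_of_subset_of_nonneg ?_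
          (fun g _ _ => Finset.prod_nonneg fun i _ => hwnn i (g i))
        intro g hg
        obtain ⟨f, _, rfl⟩ := Finset.mem_image.mp hg
        rw [Fintype.mem_piFinset]
        intro i
        rw [ht]
        by_cases hib : i = b
        · subst hib; simp [Function.update_self]
        · simp [hib]
    _ = ∏ i, ∑ j ∈ t i, w i j := (Finset.prod_univ_sum t w).symm
    _ = (∑ j, p j ^ 2) * (∑ j, p j) ^ (s - 2) := by
        rw [huniv, Finset.prod_insert ha, Finset.prod_insert hb]
        have h1 : ∑ j ∈ t a, w a j = ∑ j, p j ^ 2 := by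
          rw [ht, hw]; simp [hab, hba]
        have h2 : ∑ j ∈ t b, w b j = 1 := by
          rw [ht, hw]; simp [hab, hba]
        have h3 : ∏ i ∈ univ \ {a, b}, ∑ j ∈ t i, w i j = (∑ j, p j) ^ (s - 2) := by
          have hcongr : ∀ i ∈ (univ : Finset (Fin s)) \ {a, b},
              (∑ j ∈ t i, w i j) = ∑ j, p j := by
            intro i hi
            simp only [Finset.mem_sdiff, Finset.mem_insert, Finset.mem_singleton] at hi
            push_neg at hi
            rw [ht, hw]
            simp [hi.2.1, hi.2.2]
          rw [Finset.prod_congr rfl hcongr, Finset.prod_const]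
          congr 1
          rw [Finset.card_sdiff_of_subset (by intro x hx; exact Finset.mem_univ x)]
          simp [Finset.card_insert_of_notMem, hab, Finset.card_univ]
        rw [h1, h2, h3]
        ring



/-- Comparison of `λ^s/s!` with the `s`-th elementary symmetric polynomial:
for every `s ≥ 2` there is `C_s > 0` such that for all `d` and all `p_j ∈ [0,1]`,
`|λ^s/s! − e_s| ≤ C_s λ^{s-2} ∑_j p_j²`, where `λ = ∑_j p_j`. -/
theorem stmt_5 (s : ℕ) (hs : 2 ≤ s) :
    ∃ C : ℝ, 0 < C ∧ ∀ (d : ℕ) (p : Fin d → ℝ), (∀ j, 0 ≤ p j ∧ p j ≤ 1) →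
      |(∑ j, p j) ^ s / (s.factorial : ℝ)
          - ∑ I ∈ Finset.powersetCard s (Finset.univ : Finset (Fin d)), ∏ j ∈ I, p j|
        ≤ C * (∑ j, p j) ^ (s - 2) * ∑ j, (p j) ^ 2 := by
  classical
  have hs0 : (0:ℝ) < (s:ℝ)^2 := by
    have : (0:ℝ) < (s:ℝ) := by exact_mod_cast Nat.lt_of_lt_of_le (by norm_num) hs
    positivity
  refine ⟨(s:ℝ)^2, hs0, ?_⟩
  intro d p hp
  have hp0 : ∀ j, 0 ≤ p j := fun j => (hp j).1
  set lam : ℝ := ∑ j, p j with hlam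
  set e : ℝ := ∑ I ∈ Finset.powersetCard s (Finset.univ : Finset (Fin d)), ∏ j ∈ I, p j with he
  set Nsum : ℝ := ∑ f ∈ (univ : Finset (Fin s → Fin d)).filter
      (fun f => ¬ Function.Injective f), ∏ i, p (f i) with hN
  have step1 : lam ^ s = (s.factorial : ℝ) * e + Nsum := by
    rw [hlam, Finset.sum_pow', Fintype.piFinset_univ,
      ← Finset.sum_filter_add_sum_filter_not univ (fun f => Function.Injective f)
        (fun f => ∏ i, p (f i)), aux_inj_sum s d p]
  have hNnn : 0 ≤ Nsum :=
    Finset.sum_nonneg fun f _ => Finset.prod_nonneg fun i _ => hp0 (f i)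
  -- bound Nsum
  set P : Finset (Fin s × Fin s) := (univ ×ˢ univ).filter (fun q => q.1 ≠ q.2) with hP
  set S : Fin s × Fin s → Finset (Fin s → Fin d) :=
    fun q => univ.filter (fun f => f q.1 = f q.2) with hS
  have hbound : (0:ℝ) ≤ (∑ j, p j ^ 2) * lam ^ (s - 2) := by
    apply mul_nonneg
    · exact Finset.sum_nonneg fun j _ => sq_nonneg _
    · exact pow_nonneg (Finset.sum_nonneg fun j _ => hp0 j) _
  have hNle : Nsum ≤ (s:ℝ)^2 * ((∑ j, p j ^ 2) * lam ^ (s - 2)) := by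
    have hcover : (univ : Finset (Fin s → Fin d)).filter (fun f => ¬ Function.Injective f)
        ⊆ P.biUnion S := by
      intro f hf
      have : ¬ Function.Injective f := (Finset.mem_filter.mp hf).2
      obtain ⟨a, b, hfab, hab⟩ := Function.not_injective_iff.mp this
      refine Finset.mem_biUnion.mpr ⟨(a, b), ?_, ?_⟩
      · rw [hP]; simp [hab]
      · rw [hS]; simp [hfab]
    calc Nsum ≤ ∑ f ∈ P.biUnion S, ∏ i, p (f i) := by
          rw [hN]
          exact Finset.sum_le_sum_of_subset_of_nonneg hcover
            (fun f _ _ => Finset.prod_nonneg fun i _ => hp0 (f i))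
      _ ≤ ∑ q ∈ P, ∑ f ∈ S q, ∏ i, p (f i) :=
          aux_biUnion_sum P S _ (fun f => Finset.prod_nonneg fun i _ => hp0 (f i))
      _ ≤ ∑ q ∈ P, (∑ j, p j ^ 2) * lam ^ (s - 2) := by
          refine Finset.sum_le_sum fun q hq => ?_
          have hqne : q.1 ≠ q.2 := by
            have := (Finset.mem_filter.mp hq).2
            exact this
          exact aux_pair s d p hp0 q.1 q.2 hqne
      _ = (P.card : ℝ) * ((∑ j, p j ^ 2) * lam ^ (s - 2)) := by
          rw [Finset.sum_const, nsmul_eq_mul]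
      _ ≤ (s:ℝ)^2 * ((∑ j, p j ^ 2) * lam ^ (s - 2)) := by
          apply mul_le_mul_of_nonneg_right _ hbound
          have h1 : P.card ≤ s * s := by
            refine le_trans (Finset.card_filter_le _ _) ?_
            rw [Finset.card_product]
            simp
          calc (P.card : ℝ) ≤ ((s * s : ℕ) : ℝ) := Nat.cast_le.mpr h1
            _ = (s:ℝ)^2 := by push_cast; ring
  have hfacpos : (0:ℝ) < (s.factorial : ℝ) := by exact_mod_cast s.factorial_pos
  have hfac1 : (1:ℝ) ≤ (s.factorial : ℝ) := by exact_mod_cast s.factorial_pos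
  have heq : lam ^ s / (s.factorial : ℝ) - e = Nsum / (s.factorial : ℝ) := by
    field_simp
    linarith [step1]
  rw [heq, abs_of_nonneg (div_nonneg hNnn hfacpos.le)]
  calc Nsum / (s.factorial : ℝ) ≤ Nsum := div_le_self hNnn hfac1
    _ ≤ (s:ℝ)^2 * ((∑ j, p j ^ 2) * lam ^ (s - 2)) := hNle
    _ = (s:ℝ)^2 * lam ^ (s - 2) * ∑ j, p j ^ 2 := by ring
end

section
/- Let k ≥ 1 be an integer and let Π_μ be a Poisson random variable with mean μ > 0. Then for every integer m ≥ k, |∑_{s=k}^{m} (-1)^{s-k} C(s-1, k-1) μ^s / s! − P(Π_μ ≥ k)| ≤ C(m, k-1) μ^{m+1} / (m+1)!. -/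
open Finset

/-- partial Bonferroni sum over the integers -/
def bonfS (k m n : ℕ) : ℤ :=
  ∑ s ∈ Finset.Icc k m, (-1 : ℤ) ^ (s - k) * ((s - 1).choose (k - 1) : ℤ) * (n.choose s : ℤ)

def bonfInd (k n : ℕ) : ℤ := if k ≤ n then 1 else 0

def bonfU (k m n : ℕ) : ℤ := (-1 : ℤ) ^ (m + 1 - k) * (bonfInd k n - bonfS k m n)

lemma neg_one_pow_sub (k s : ℕ) (h : k ≤ s) : ((-1 : ℤ)) ^ (s - k) = (-1) ^ s * (-1) ^ k := by
  have : ((-1 : ℤ)) ^ (s - k) * (-1) ^ k = (-1) ^ s := by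
    rw [← pow_add]; congr 1; omega
  have hk : ((-1 : ℤ)) ^ k * (-1) ^ k = 1 := by
    rw [← pow_add, ← two_mul, pow_mul]; norm_num
  calc ((-1 : ℤ)) ^ (s - k) = (-1 : ℤ) ^ (s - k) * ((-1) ^ k * (-1) ^ k) := by rw [hk, mul_one]
    _ = ((-1 : ℤ) ^ (s - k) * (-1) ^ k) * (-1) ^ k := by ring
    _ = (-1) ^ s * (-1) ^ k := by rw [this]

lemma bonfS_zero (k m : ℕ) (hk : 1 ≤ k) : bonfS k m 0 = 0 := by
  apply Finset.sum_eq_zero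
  intro s hs
  simp only [Finset.mem_Icc] at hs
  have : Nat.choose 0 s = 0 := Nat.choose_eq_zero_of_lt (by omega)
  simp [this]

/-- closed form for k = 1 -/
lemma bonfS_one (m n : ℕ) (hm : 1 ≤ m) :
    bonfS 1 m n = bonfInd 1 n - (-1 : ℤ) ^ m * ((n - 1).choose m : ℤ) := by
  induction m with
  | zero => omega
  | succ m ih =>
    rcases Nat.eq_or_lt_of_le hm with h | h
    · -- m + 1 = 1
      have hm0 : m = 0 := by omega
      subst hm0
      rcases Nat.eq_zero_or_pos n with hn | hn
      · subst hn; simp [bonfS, bonfInd]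
      · have hb : bonfS 1 1 n = (n : ℤ) := by
          simp [bonfS, Nat.choose_one_right]
        rw [hb]
        simp only [bonfInd, if_pos hn]
        norm_num [Nat.choose_one_right]
        omega
    · have hm1 : 1 ≤ m := by omega
      rw [bonfS, Finset.sum_Icc_succ_top (by omega), ← bonfS, ih hm1]
      have hch : ((n.choose (m+1) : ℤ)) - ((n-1).choose m : ℤ) = ((n-1).choose (m+1) : ℤ) := by
        rcases Nat.eq_zero_or_pos n with hn | hn
        · subst hn
          have h1 : Nat.choose 0 (m+1) = 0 := Nat.choose_eq_zero_of_lt (by omega)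
          have h2 : Nat.choose 0 m = 0 := Nat.choose_eq_zero_of_lt (by omega)
          simp [h1, h2]
        · have hn1 : n = (n - 1) + 1 := by omega
          have hchN : n.choose (m+1) = (n-1).choose m + (n-1).choose (m+1) := by
            conv_lhs => rw [hn1, Nat.choose_succ_succ]
          push_cast [hchN]
          ring
      have hsgn : ((-1:ℤ))^(m+1-1) = (-1:ℤ)^m := by norm_num
      rw [hsgn]
      have : ((m+1-1).choose (1-1) : ℤ) = 1 := by norm_num
      rw [this]
      rw [pow_succ]
      linear_combination ((-1:ℤ))^m * hch

/-- the Pascal recursion for bonfS -/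
lemma bonfS_rec (k m n : ℕ) (hk : 2 ≤ k) (hm : k ≤ m) :
    bonfS k m (n + 1) = bonfS k m n - bonfS k (m - 1) n + bonfS (k - 1) (m - 1) n := by
  have expand : bonfS k m (n+1) = bonfS k m n
      + ∑ s ∈ Finset.Icc k m, (-1 : ℤ) ^ (s - k) * ((s - 1).choose (k - 1) : ℤ) * ((n.choose (s-1) : ℤ)) := by
    rw [bonfS, bonfS, ← Finset.sum_add_distrib]
    apply Finset.sum_congr rfl
    intro s hs
    simp only [Finset.mem_Icc] at hs
    have hs1 : s = (s - 1) + 1 := by omega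
    have : (n+1).choose s = n.choose s + n.choose (s - 1) := by
      conv_lhs => rw [hs1, Nat.choose_succ_succ]
      rw [Nat.succ_eq_add_one, ← hs1]
      omega
    rw [this]; push_cast; ring
  -- reindex the second sum: t = s - 1 over Icc (k-1) (m-1)
  have reindex : ∑ s ∈ Finset.Icc k m, (-1 : ℤ) ^ (s - k) * ((s - 1).choose (k - 1) : ℤ) * ((n.choose (s-1) : ℤ))
      = ∑ t ∈ Finset.Icc (k-1) (m-1), (-1 : ℤ) ^ (t + 1 - k) * ((t).choose (k - 1) : ℤ) * ((n.choose t : ℤ)) := by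
    apply Finset.sum_nbij' (fun s => s - 1) (fun t => t + 1)
    · intro s hs; simp only [Finset.mem_Icc] at *; omega
    · intro t ht; simp only [Finset.mem_Icc] at *; omega
    · intro s hs; simp only [Finset.mem_Icc] at hs; omega
    · intro t ht; simp only [Finset.mem_Icc] at ht; omega
    · intro s hs
      simp only [Finset.mem_Icc] at hs
      have h1 : s - 1 + 1 - k = s - k := by omega
      rw [h1]
  -- split via Pascal on choose t (k-1)
  have split : ∑ t ∈ Finset.Icc (k-1) (m-1), (-1 : ℤ) ^ (t + 1 - k) * ((t).choose (k - 1) : ℤ) * ((n.choose t : ℤ))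
      = - bonfS k (m-1) n + bonfS (k-1) (m-1) n := by
    have pascal : ∀ t ∈ Finset.Icc (k-1) (m-1),
        (-1 : ℤ) ^ (t + 1 - k) * ((t).choose (k - 1) : ℤ) * ((n.choose t : ℤ))
        = (-1 : ℤ) ^ (t + 1 - k) * ((t-1).choose (k - 1) : ℤ) * ((n.choose t : ℤ))
          + (-1 : ℤ) ^ (t - (k-1)) * ((t-1).choose ((k-1) - 1) : ℤ) * ((n.choose t : ℤ)) := by
      intro t ht
      simp only [Finset.mem_Icc] at ht
      have ht1 : 1 ≤ t := by omega
      have hch : t.choose (k-1) = (t-1).choose (k-2) + (t-1).choose (k-1) := by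
        have h1 : t = (t - 1) + 1 := by omega
        have h2 : k - 1 = (k - 2) + 1 := by omega
        conv_lhs => rw [h1, h2, Nat.choose_succ_succ]
        rw [Nat.succ_eq_add_one, ← h2]
      have he : t + 1 - k = t - (k - 1) := by omega
      have h3 : (k - 1) - 1 = k - 2 := by omega
      rw [hch, he, h3]; push_cast; ring
    rw [Finset.sum_congr rfl pascal, Finset.sum_add_distrib]
    have hfirst : ∑ t ∈ Finset.Icc (k-1) (m-1), (-1 : ℤ) ^ (t + 1 - k) * ((t-1).choose (k - 1) : ℤ) * ((n.choose t : ℤ))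
        = - bonfS k (m-1) n := by
      have hIcc : Finset.Icc (k-1) (m-1) = insert (k-1) (Finset.Icc k (m-1)) := by
        ext t; simp only [Finset.mem_Icc, Finset.mem_insert]; omega
      have hnot : (k-1) ∉ Finset.Icc k (m-1) := by
        simp only [Finset.mem_Icc]; omega
      rw [hIcc, Finset.sum_insert hnot]
      have hz : ((k-1-1).choose (k - 1) : ℤ) = 0 := by
        have : (k-1-1).choose (k-1) = 0 := Nat.choose_eq_zero_of_lt (by omega)
        rw [this]; norm_num
      rw [hz, bonfS]
      rw [mul_zero, zero_mul, zero_add, ← Finset.sum_neg_distrib]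
      apply Finset.sum_congr rfl
      intro t ht
      simp only [Finset.mem_Icc] at ht
      have h1 : t + 1 - k = (t - k) + 1 := by omega
      rw [h1, pow_succ]
      ring
    rw [hfirst, bonfS]
    congr 1
  rw [expand, reindex, split]; ring

lemma bonfInd_shift (k n : ℕ) (hk : 2 ≤ k) : bonfInd k (n+1) = bonfInd (k-1) n := by
  simp only [bonfInd]
  rw [if_congr (show (k ≤ n+1) ↔ (k-1 ≤ n) by omega) rfl rfl]

lemma bonfU_rec (k m n : ℕ) (hk : 2 ≤ k) (hm : k + 1 ≤ m) :
    bonfU k m (n+1) = bonfU k m n + bonfU k (m-1) n + bonfU (k-1) (m-1) n := by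
  simp only [bonfU]
  rw [bonfS_rec k m n hk (by omega), bonfInd_shift k n hk]
  have e1 : m + 1 - k = (m - k) + 1 := by omega
  have e2 : (m-1) + 1 - k = m - k := by omega
  have e3 : (m-1) + 1 - (k-1) = (m - k) + 1 := by omega
  rw [e1, e2, e3, pow_succ]
  ring

lemma bonfU_nonneg : ∀ n k m : ℕ, 1 ≤ k → k ≤ m → 0 ≤ bonfU k m n := by
  intro n
  induction n with
  | zero =>
    intro k m hk hm
    simp [bonfU, bonfS_zero k m hk, bonfInd, (show ¬ k ≤ 0 by omega)]
  | succ n ih =>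
    intro k m hk hm
    rcases eq_or_lt_of_le hk with hk1 | hk2
    · -- k = 1
      rw [bonfU, ← hk1, bonfS_one m (n+1) (by omega)]
      have e1 : m + 1 - 1 = m := by omega
      have e2 : n + 1 - 1 = n := by omega
      rw [e1, e2]
      have hsq : ((-1:ℤ))^m * (-1)^m = 1 := by
        rw [← pow_add, ← two_mul, pow_mul]; norm_num
      have : (-1:ℤ)^m * (bonfInd 1 (n+1) - (bonfInd 1 (n+1) - (-1)^m * ((n).choose m : ℤ)))
          = ((n).choose m : ℤ) := by
        linear_combination ((n.choose m : ℤ)) * hsq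
      rw [this]
      positivity
    · rcases eq_or_lt_of_le hm with hm1 | hm2
      · -- m = k
        subst hm1
        have hS : bonfS k k (n+1) = ((n+1).choose k : ℤ) := by
          simp [bonfS, Nat.choose_self]
        rw [bonfU, hS, show k + 1 - k = 1 by omega, pow_one, bonfInd]
        split_ifs with h
        · have := Nat.choose_pos h
          omega
        · omega
      · -- m > k, k ≥ 2
        rw [bonfU_rec k m n (by omega) (by omega)]
        have h1 := ih k m (by omega) (by omega)
        have h2 := ih k (m-1) (by omega) (by omega)
        have h3 := ih (k-1) (m-1) (by omega) (by omega)
        linarith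

lemma bonf_abs_le (k m n : ℕ) (hk : 1 ≤ k) (hm : k ≤ m) :
    |bonfInd k n - bonfS k m n| ≤ (m.choose (k-1) : ℤ) * (n.choose (m+1) : ℤ) := by
  have h1 := bonfU_nonneg n k m hk hm
  have h2 := bonfU_nonneg n k (m+1) hk (by omega)
  have hstep : bonfS k (m+1) n
      = bonfS k m n + (-1:ℤ)^(m+1-k) * (m.choose (k-1) : ℤ) * (n.choose (m+1) : ℤ) := by
    rw [bonfS, Finset.sum_Icc_succ_top (by omega : k ≤ m + 1), ← bonfS]
    norm_num
  have hsq : ((-1:ℤ))^(m+1-k) * (-1)^(m+1-k) = 1 := by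
    rw [← pow_add, ← two_mul, pow_mul]; norm_num
  have hU : bonfU k (m+1) n
      = (m.choose (k-1):ℤ) * (n.choose (m+1):ℤ) - bonfU k m n := by
    rw [bonfU, bonfU, hstep]
    have e : m + 1 + 1 - k = (m + 1 - k) + 1 := by omega
    rw [e, pow_succ]
    linear_combination ((m.choose (k-1):ℤ) * (n.choose (m+1):ℤ)) * hsq
  have habs : |bonfInd k n - bonfS k m n| = bonfU k m n := by
    rcases Nat.even_or_odd (m+1-k) with he | he
    · rw [bonfU, he.neg_one_pow, one_mul]
      exact abs_of_nonneg (by rw [bonfU, he.neg_one_pow, one_mul] at h1; exact h1)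
    · rw [bonfU, he.neg_one_pow]
      have h1' := h1
      rw [bonfU, he.neg_one_pow] at h1'
      rw [abs_of_nonpos (by linarith)]
      ring
  rw [habs]
  linarith

lemma poisson_choose_hasSum (μ : ℝ) (s : ℕ) :
    HasSum (fun n : ℕ => Real.exp (-μ) * μ ^ n / (n.factorial : ℝ) * (n.choose s : ℝ))
      (μ ^ s / (s.factorial : ℝ)) := by
  set f : ℕ → ℝ := fun n => Real.exp (-μ) * μ ^ n / (n.factorial : ℝ) * (n.choose s : ℝ) with hf
  have hfac : ∀ j : ℕ, (j.factorial : ℝ) ≠ 0 :=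
    fun j => Nat.cast_ne_zero.mpr (Nat.factorial_ne_zero j)
  have hg : ∀ j : ℕ, f (j + s)
      = (Real.exp (-μ) * μ ^ s / (s.factorial : ℝ)) * (μ ^ j / (j.factorial : ℝ)) := by
    intro j
    have hch : ((j+s).choose s : ℝ) * ((j.factorial : ℝ) * (s.factorial : ℝ))
        = ((j+s).factorial : ℝ) := by
      rw [← mul_assoc]
      exact_mod_cast congrArg (Nat.cast : ℕ → ℝ)
        (Nat.add_choose_mul_factorial_mul_factorial j s)
    have hC : ((j+s).choose s : ℝ)
        = ((j+s).factorial : ℝ) / ((j.factorial : ℝ) * (s.factorial : ℝ)) := by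
      field_simp [hch]
      linear_combination hch
    simp only [hf]
    rw [hC, pow_add]
    field_simp
  have hexp : HasSum (fun j : ℕ => μ ^ j / (j.factorial : ℝ)) (Real.exp μ) := by
    have hsum := Real.summable_pow_div_factorial μ
    have hval : ∑' j : ℕ, μ ^ j / (j.factorial : ℝ) = Real.exp μ := by
      rw [Real.exp_eq_exp_ℝ, NormedSpace.exp_eq_tsum_div]
    exact hval ▸ hsum.hasSum
  have hgsum : HasSum (fun j : ℕ => f (j + s)) (μ ^ s / (s.factorial : ℝ)) := by
    have h2 := hexp.mul_left (Real.exp (-μ) * μ ^ s / (s.factorial : ℝ))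
    have hval : Real.exp (-μ) * μ ^ s / (s.factorial : ℝ) * Real.exp μ
        = μ ^ s / (s.factorial : ℝ) := by
      have : Real.exp (-μ) * Real.exp μ = 1 := by
        rw [← Real.exp_add]; simp
      field_simp
      linear_combination (μ ^ s) * this
    rw [hval] at h2
    exact h2.congr_fun hg
  have hi : Function.Injective (fun j : ℕ => j + s) := fun a b h => by simpa using h
  have hzero : ∀ x ∉ Set.range (fun j : ℕ => j + s), f x = 0 := by
    intro x hx
    have hxs : x < s := by
      by_contra h
      exact hx ⟨x - s, by simp; omega⟩
    simp only [hf]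
    rw [Nat.choose_eq_zero_of_lt hxs]
    simp
  exact (hi.hasSum_iff hzero).mp hgsum

/-- Poisson Bonferroni bound: for a Poisson variable `Π_μ` with mean `μ > 0`
(whose upper-tail probability `P(Π_μ ≥ k)` is `∑_{n≥k} e^{−μ} μ^n/n!`),
`|∑_{s=k}^{m} (-1)^{s-k} C(s-1,k-1) μ^s/s! − P(Π_μ ≥ k)| ≤ C(m,k-1) μ^{m+1}/(m+1)!`. -/
theorem stmt_8 (k m : ℕ) (hk : 1 ≤ k) (hm : k ≤ m) (μ : ℝ) (hμ : 0 < μ) :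
    |(∑ s ∈ Finset.Icc k m,
        (-1 : ℝ) ^ (s - k) * ((s - 1).choose (k - 1) : ℝ) * μ ^ s / (s.factorial : ℝ))
        - ∑' n : ℕ, (if k ≤ n then Real.exp (-μ) * μ ^ n / (n.factorial : ℝ) else 0)|
      ≤ (m.choose (k - 1) : ℝ) * μ ^ (m + 1) / ((m + 1).factorial : ℝ) := by
  set P : ℕ → ℝ := fun n => Real.exp (-μ) * μ ^ n / (n.factorial : ℝ) with hPdef
  have hPpos : ∀ n, 0 ≤ P n := fun n => by
    have : (0:ℝ) < (n.factorial : ℝ) := by exact_mod_cast n.factorial_pos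
    positivity
  have hkey : ∀ s : ℕ, HasSum (fun n => P n * (n.choose s : ℝ))
      (μ ^ s / (s.factorial : ℝ)) := fun s => poisson_choose_hasSum μ s
  have hgoal : (∑' n : ℕ, (if k ≤ n then Real.exp (-μ) * μ ^ n / (n.factorial : ℝ) else 0))
      = ∑' n : ℕ, (if k ≤ n then P n else 0) := rfl
  rw [hgoal]
  set c : ℕ → ℝ := fun s => (-1 : ℝ) ^ (s - k) * ((s - 1).choose (k - 1) : ℝ) with hcdef
  -- Step 1: rewrite the finite sum as a tsum
  have hA : (∑ s ∈ Finset.Icc k m,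
        (-1 : ℝ) ^ (s - k) * ((s - 1).choose (k - 1) : ℝ) * μ ^ s / (s.factorial : ℝ))
      = ∑' n : ℕ, ∑ s ∈ Finset.Icc k m, c s * (P n * (n.choose s : ℝ)) := by
    rw [Summable.tsum_finsetSum (fun s _ => ((hkey s).summable.mul_left (c s)))]
    apply Finset.sum_congr rfl
    intro s _
    rw [Summable.tsum_mul_left _ (hkey s).summable, (hkey s).tsum_eq, hcdef]
    ring
  have hinner : ∀ n : ℕ, ∑ s ∈ Finset.Icc k m, c s * (P n * (n.choose s : ℝ))
      = P n * ((bonfS k m n : ℤ) : ℝ) := by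
    intro n
    rw [bonfS]
    push_cast
    rw [Finset.mul_sum]
    apply Finset.sum_congr rfl
    intro s _
    simp only [hcdef]
    ring
  have hite : ∀ n : ℕ, (if k ≤ n then P n else 0) = P n * ((bonfInd k n : ℤ) : ℝ) := by
    intro n
    rw [bonfInd]
    split_ifs <;> simp
  -- summability facts
  have hS1 : Summable (fun n => P n * ((bonfS k m n : ℤ) : ℝ)) := by
    apply Summable.congr (f := fun n => ∑ s ∈ Finset.Icc k m, c s * (P n * (n.choose s : ℝ)))
    · exact summable_sum (fun s _ => ((hkey s).summable.mul_left (c s)))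
    · exact hinner
  have hS2 : Summable (fun n => P n * ((bonfInd k n : ℤ) : ℝ)) := by
    apply Summable.congr (f := fun n : ℕ => if k ≤ n then P n else 0) _ hite
    apply Summable.of_nonneg_of_le (f := P)
    · intro n; split_ifs with h
      · exact hPpos n
      · exact le_refl 0
    · intro n; split_ifs with h
      · exact le_refl _
      · exact hPpos n
    · simpa using (hkey 0).summable
  -- the difference
  have hdiff : (∑ s ∈ Finset.Icc k m,
        (-1 : ℝ) ^ (s - k) * ((s - 1).choose (k - 1) : ℝ) * μ ^ s / (s.factorial : ℝ))
        - (∑' n : ℕ, (if k ≤ n then P n else 0))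
      = ∑' n : ℕ, (P n * ((bonfS k m n : ℤ) : ℝ) - P n * ((bonfInd k n : ℤ) : ℝ)) := by
    rw [hA, tsum_congr hinner, tsum_congr hite, ← Summable.tsum_sub hS1 hS2]
  rw [hdiff]
  -- pointwise bound
  have hpt : ∀ n : ℕ, ‖P n * ((bonfS k m n : ℤ) : ℝ) - P n * ((bonfInd k n : ℤ) : ℝ)‖
      ≤ P n * ((m.choose (k-1) : ℝ) * (n.choose (m+1) : ℝ)) := by
    intro n
    have h1 : |((bonfS k m n : ℤ) : ℝ) - ((bonfInd k n : ℤ) : ℝ)|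
        ≤ (m.choose (k-1) : ℝ) * (n.choose (m+1) : ℝ) := by
      have h2 := bonf_abs_le k m n hk hm
      have h3 : |bonfS k m n - bonfInd k n| ≤ (m.choose (k-1) : ℤ) * (n.choose (m+1) : ℤ) := by
        rw [abs_sub_comm]; exact h2
      calc |((bonfS k m n : ℤ) : ℝ) - ((bonfInd k n : ℤ) : ℝ)|
          = (((|bonfS k m n - bonfInd k n| : ℤ)) : ℝ) := by
            rw [← Int.cast_sub, ← Int.cast_abs]
        _ ≤ (((m.choose (k-1) : ℤ) * (n.choose (m+1) : ℤ) : ℤ) : ℝ) := by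
            exact_mod_cast h3
        _ = (m.choose (k-1) : ℝ) * (n.choose (m+1) : ℝ) := by push_cast; ring
    calc ‖P n * ((bonfS k m n : ℤ) : ℝ) - P n * ((bonfInd k n : ℤ) : ℝ)‖
        = P n * |((bonfS k m n : ℤ) : ℝ) - ((bonfInd k n : ℤ) : ℝ)| := by
          rw [← mul_sub, Real.norm_eq_abs, abs_mul, abs_of_nonneg (hPpos n)]
      _ ≤ P n * ((m.choose (k-1) : ℝ) * (n.choose (m+1) : ℝ)) :=
          mul_le_mul_of_nonneg_left h1 (hPpos n)
  have hbndsum : Summable (fun n : ℕ => P n * ((m.choose (k-1) : ℝ) * (n.choose (m+1) : ℝ))) := by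
    apply Summable.congr (f := fun n : ℕ => (m.choose (k-1) : ℝ) * (P n * (n.choose (m+1) : ℝ)))
    · exact (hkey (m+1)).summable.mul_left _
    · intro n; ring
  have hnormsum : Summable (fun n : ℕ =>
      ‖P n * ((bonfS k m n : ℤ) : ℝ) - P n * ((bonfInd k n : ℤ) : ℝ)‖) := by
    apply Summable.of_nonneg_of_le (fun n => norm_nonneg _) hpt hbndsum
  calc |∑' n : ℕ, (P n * ((bonfS k m n : ℤ) : ℝ) - P n * ((bonfInd k n : ℤ) : ℝ))|
      ≤ ∑' n : ℕ, ‖P n * ((bonfS k m n : ℤ) : ℝ) - P n * ((bonfInd k n : ℤ) : ℝ)‖ := by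
        rw [← Real.norm_eq_abs]
        exact norm_tsum_le_tsum_norm hnormsum
    _ ≤ ∑' n : ℕ, P n * ((m.choose (k-1) : ℝ) * (n.choose (m+1) : ℝ)) :=
        Summable.tsum_le_tsum hpt hnormsum hbndsum
    _ = (m.choose (k - 1) : ℝ) * μ ^ (m + 1) / ((m + 1).factorial : ℝ) := by
        rw [tsum_congr (fun n : ℕ => by ring :
          ∀ n : ℕ, P n * ((m.choose (k-1) : ℝ) * (n.choose (m+1) : ℝ))
            = (m.choose (k-1) : ℝ) * (P n * (n.choose (m+1) : ℝ)))]
        rw [Summable.tsum_mul_left _ (hkey (m+1)).summable, (hkey (m+1)).tsum_eq]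
        ring
end

section
/- Let (Z_1, …, Z_m) be a centered Gaussian vector with Var(Z_r) = σ² for all r and with all pairwise correlations at most ϑ_* < 1. Then for every t > 0, P(Z_r > t for all r = 1,…,m) ≤ Φ̄( sqrt(m / (1 + (m−1)ϑ_*)) · t/σ ), where Φ̄ is the standard normal survival function. Moreover, by Mills' ratio this is at most (σ √(1+(m−1)ϑ_*) / (√(2πm) t)) exp( −m t² / (2σ²(1+(m−1)ϑ_*)) ). -/
open MeasureTheory ProbabilityTheory Real Set Filter
open scoped NNReal ENNReal

/-- The standard Gaussian survival function `Φ̄(u) = P(N(0,1) > u)`. -/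
noncomputable def stdGaussianSurvival (u : ℝ) : ℝ :=
  ((gaussianReal 0 1) (Set.Ioi u)).toReal


lemma aux_int_exp : Integrable (fun x : ℝ => Real.exp (-x^2/2)) := by
  have := integrable_exp_neg_mul_sq (by norm_num : (0:ℝ) < 1/2)
  convert this using 2 with x
  ring_nf

lemma aux_int_xexp : Integrable (fun x : ℝ => x * Real.exp (-x^2/2)) := by
  have := integrable_mul_exp_neg_mul_sq (by norm_num : (0:ℝ) < 1/2)
  convert this using 2 with x
  ring_nf

lemma aux_int_x2exp : Integrable (fun x : ℝ => x^2 * Real.exp (-x^2/2)) := by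
  have := integrable_rpow_mul_exp_neg_mul_sq (by norm_num : (0:ℝ) < 1/2)
    (by norm_num : (-1:ℝ) < 2)
  convert this using 2 with x
  rw [show ((2:ℝ)) = ((2:ℕ):ℝ) by norm_num, Real.rpow_natCast]
  ring_nf

lemma aux_tendsto_exp : Tendsto (fun x : ℝ => -Real.exp (-x^2/2)) atTop (nhds 0) := by
  rw [show (0:ℝ) = -0 by ring]
  apply Tendsto.neg
  apply Real.tendsto_exp_atBot.comp
  have h : Tendsto (fun x : ℝ => x^2) atTop atTop :=
    tendsto_pow_atTop (by norm_num)
  have := tendsto_neg_atTop_atBot.comp (h.atTop_div_const (by norm_num : (0:ℝ) < 2))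
  convert this using 2 with x
  simp [Function.comp]; ring

lemma aux_tendsto_xexp : Tendsto (fun x : ℝ => -(x * Real.exp (-x^2/2))) atTop (nhds 0) := by
  rw [show (0:ℝ) = -0 by ring]
  apply Tendsto.neg
  have h := (rpow_mul_exp_neg_mul_sq_isLittleO_exp_neg (by norm_num : (0:ℝ) < 1/2) 1)
  have h2 : Tendsto (fun x : ℝ => Real.exp (-(1/2) * x)) atTop (nhds 0) := by
    apply Real.tendsto_exp_atBot.comp
    have h3 := tendsto_neg_atTop_atBot.comp (tendsto_id.const_mul_atTop (by norm_num : (0:ℝ) < 1/2))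
    convert h3 using 1
    ext x
    simp [Function.comp]
  have := h.trans_tendsto h2
  convert this using 2 with x
  rw [Real.rpow_one]; ring_nf

lemma aux_I1 (u : ℝ) : ∫ x in Ioi u, x * Real.exp (-x^2/2) = Real.exp (-u^2/2) := by
  have h : ∀ x ∈ Ici u, HasDerivAt (fun y : ℝ => -Real.exp (-y^2/2)) (x * Real.exp (-x^2/2)) x := by
    intro x _
    have h1 : HasDerivAt (fun y : ℝ => -y^2/2) (-x) x := by
      have : HasDerivAt (fun y : ℝ => -(y^2)/2) (-((2:ℕ) * x^(2-1))/2) x := (hasDerivAt_pow 2 x).neg.div_const 2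
      convert this using 1
      · push_cast; ring
    have : HasDerivAt (fun y : ℝ => -Real.exp (-y^2/2)) (-(Real.exp (-x^2/2) * -x)) x := (h1.exp).neg
    convert this using 1
    ring
  have := integral_Ioi_of_hasDerivAt_of_tendsto' h (aux_int_xexp.integrableOn) aux_tendsto_exp
  rw [this]; ring

lemma aux_hd : ∀ x : ℝ, HasDerivAt (fun y : ℝ => -(y * Real.exp (-y^2/2)))
    ((x^2 - 1) * Real.exp (-x^2/2)) x := by
  intro x
  have h1 : HasDerivAt (fun y : ℝ => -y^2/2) (-x) x := by
    have : HasDerivAt (fun y : ℝ => -(y^2)/2) (-((2:ℕ) * x^(2-1))/2) x := (hasDerivAt_pow 2 x).neg.div_const 2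
    convert this using 1
    · push_cast; ring
  have h2 : HasDerivAt (fun y : ℝ => -(y * Real.exp (-y^2/2)))
      (-(1 * Real.exp (-x^2/2) + x * (Real.exp (-x^2/2) * -x))) x := ((hasDerivAt_id x).mul h1.exp).neg
  convert h2 using 1
  ring

lemma aux_int_sub : Integrable (fun x : ℝ => (x^2 - 1) * Real.exp (-x^2/2)) := by
  have := aux_int_x2exp.sub aux_int_exp
  convert this using 2 with x
  simp only [Pi.sub_apply]; ring

lemma aux_I2 : ∫ x : ℝ, (x^2 - 1) * Real.exp (-x^2/2) = 0 := by
  have g0 : Tendsto (fun x : ℝ => x * Real.exp (-x^2/2)) atTop (nhds 0) := by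
    have := aux_tendsto_xexp.neg
    simpa using this
  have htop : ∫ x in Set.Ioi (0:ℝ), (x^2 - 1) * Real.exp (-x^2/2) = 0 := by
    have hT : Tendsto (fun y : ℝ => -(y * Real.exp (-y^2/2))) atTop (nhds 0) := by
      simpa using g0.neg
    have := integral_Ioi_of_hasDerivAt_of_tendsto' (a := 0) (fun x _ => aux_hd x)
      (aux_int_sub.integrableOn) hT
    simpa using this
  have hbot : ∫ x in Set.Iic (0:ℝ), (x^2 - 1) * Real.exp (-x^2/2) = 0 := by
    have hT : Tendsto (fun y : ℝ => -(y * Real.exp (-y^2/2))) atBot (nhds 0) := by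
      have : (fun y : ℝ => -(y * Real.exp (-y^2/2)))
          = (fun y : ℝ => y * Real.exp (-y^2/2)) ∘ Neg.neg := by
        ext y; simp only [Function.comp, neg_neg]; congr 1; ring_nf
      rw [this]
      exact g0.comp tendsto_neg_atBot_atTop
    have := integral_Iic_of_hasDerivAt_of_tendsto' (a := 0) (fun x _ => aux_hd x)
      (aux_int_sub.integrableOn) hT
    simpa using this
  rw [← intervalIntegral.integral_Iic_add_Ioi (aux_int_sub.integrableOn) (aux_int_sub.integrableOn), htop, hbot]
  norm_num

lemma aux_int_exp_eq : ∫ x : ℝ, Real.exp (-x^2/2) = Real.sqrt (2 * Real.pi) := by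
  have := integral_gaussian (1/2)
  rw [show Real.pi / (1/2) = 2 * Real.pi by ring] at this
  rw [← this]
  congr 1 with x
  ring_nf

lemma aux_I2' : ∫ x : ℝ, x^2 * Real.exp (-x^2/2) = Real.sqrt (2 * Real.pi) := by
  have h : ∫ x : ℝ, ((x^2 - 1) * Real.exp (-x^2/2) + Real.exp (-x^2/2))
      = ∫ x : ℝ, x^2 * Real.exp (-x^2/2) := by
    congr 1 with x; ring
  rw [← h, integral_add aux_int_sub aux_int_exp, aux_I2, aux_int_exp_eq, zero_add]

lemma aux_pdf01 (x : ℝ) :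
    gaussianPDFReal 0 1 x = (Real.sqrt (2*Real.pi))⁻¹ * Real.exp (-x^2/2) := by
  simp [gaussianPDFReal]

lemma aux_integral_g01 (f : ℝ → ℝ) :
    ∫ x, f x ∂(gaussianReal 0 1) = ∫ x, gaussianPDFReal 0 1 x * f x := by
  rw [gaussianReal_of_var_ne_zero 0 one_ne_zero, gaussianPDF_def]
  have h : (fun x => ENNReal.ofReal (gaussianPDFReal 0 1 x))
      = fun x => ((Real.toNNReal (gaussianPDFReal 0 1 x) : ℝ≥0) : ℝ≥0∞) := rfl
  rw [h, integral_withDensity_eq_integral_smul (measurable_gaussianPDFReal 0 1).real_toNNReal f]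
  congr 1 with x
  simp [NNReal.smul_def, Real.coe_toNNReal _ (gaussianPDFReal_nonneg 0 1 x)]

lemma aux_integrable_g01 (f : ℝ → ℝ)
    (hf : Integrable (fun x => gaussianPDFReal 0 1 x * f x)) :
    Integrable f (gaussianReal 0 1) := by
  rw [gaussianReal_of_var_ne_zero 0 one_ne_zero, gaussianPDF_def]
  have h : (fun x => ENNReal.ofReal (gaussianPDFReal 0 1 x))
      = fun x => ((Real.toNNReal (gaussianPDFReal 0 1 x) : ℝ≥0) : ℝ≥0∞) := rfl
  rw [h, integrable_withDensity_iff_integrable_smul (measurable_gaussianPDFReal 0 1).real_toNNReal]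
  apply hf.congr
  filter_upwards with x
  simp [NNReal.smul_def, Real.coe_toNNReal _ (gaussianPDFReal_nonneg 0 1 x)]

lemma aux_sqrt2pi_pos : 0 < Real.sqrt (2 * Real.pi) :=
  Real.sqrt_pos.mpr (by positivity)

lemma aux_mom1_int : Integrable (fun x : ℝ => x^2) (gaussianReal 0 1) := by
  apply aux_integrable_g01
  have := aux_int_x2exp.const_mul (Real.sqrt (2*Real.pi))⁻¹
  apply this.congr
  filter_upwards with x
  rw [aux_pdf01]; ring

lemma aux_mom1 : ∫ x : ℝ, x^2 ∂(gaussianReal 0 1) = 1 := by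
  rw [aux_integral_g01]
  have h : ∀ x : ℝ, gaussianPDFReal 0 1 x * x^2
      = (Real.sqrt (2*Real.pi))⁻¹ * (x^2 * Real.exp (-x^2/2)) := by
    intro x; rw [aux_pdf01]; ring
  simp_rw [h]
  rw [integral_const_mul, aux_I2', inv_mul_cancel₀ aux_sqrt2pi_pos.ne']

lemma aux_map_v (v : ℝ≥0) :
    Measure.map (fun x => (Real.sqrt v) * x) (gaussianReal 0 1) = gaussianReal 0 v := by
  have h := gaussianReal_map_const_mul (μ := 0) (v := 1) (Real.sqrt v)
  simp only [mul_zero, mul_one] at h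
  rw [show (fun x : ℝ => (Real.sqrt v) * x) = ((Real.sqrt v) * ·) from rfl, h]
  congr 1
  ext
  exact Real.sq_sqrt v.coe_nonneg

lemma aux_momv_int (v : ℝ≥0) : Integrable (fun x : ℝ => x^2) (gaussianReal 0 v) := by
  rw [← aux_map_v v]
  rw [integrable_map_measure (by fun_prop) (by fun_prop)]
  have := aux_mom1_int.const_mul ((v : ℝ))
  apply this.congr
  filter_upwards with x
  simp only [Function.comp]
  rw [mul_pow, Real.sq_sqrt v.coe_nonneg]

lemma aux_momv (v : ℝ≥0) : ∫ x : ℝ, x^2 ∂(gaussianReal 0 v) = v := by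
  rw [← aux_map_v v, integral_map (by fun_prop) (by fun_prop)]
  have h : ∀ x : ℝ, ((Real.sqrt v) * x)^2 = (v : ℝ) * x^2 := by
    intro x; rw [mul_pow, Real.sq_sqrt v.coe_nonneg]
  simp_rw [h]
  rw [integral_const_mul, aux_mom1, mul_one]

lemma aux_surv_eq (u : ℝ) :
    stdGaussianSurvival u = (Real.sqrt (2*Real.pi))⁻¹ * ∫ x in Ioi u, Real.exp (-x^2/2) := by
  rw [stdGaussianSurvival, gaussianReal_apply_eq_integral 0 one_ne_zero,
    ENNReal.toReal_ofReal (integral_nonneg (fun x => gaussianPDFReal_nonneg 0 1 x))]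
  rw [← integral_const_mul]
  congr 1 with x
  rw [aux_pdf01]

lemma aux_surv_nonneg (u : ℝ) : 0 ≤ stdGaussianSurvival u := ENNReal.toReal_nonneg

lemma aux_surv_mono {u u' : ℝ} (h : u ≤ u') : stdGaussianSurvival u' ≤ stdGaussianSurvival u :=
  ENNReal.toReal_mono (measure_ne_top _ _) (measure_mono (Ioi_subset_Ioi h))

lemma aux_mills {u : ℝ} (hu : 0 < u) :
    stdGaussianSurvival u ≤ (Real.sqrt (2*Real.pi))⁻¹ * (u⁻¹ * Real.exp (-u^2/2)) := by
  rw [aux_surv_eq]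
  apply mul_le_mul_of_nonneg_left _ (by positivity)
  have key : ∫ x in Ioi u, Real.exp (-x^2/2) ≤ ∫ x in Ioi u, u⁻¹ * (x * Real.exp (-x^2/2)) := by
    apply setIntegral_mono_on (aux_int_exp.integrableOn)
      ((aux_int_xexp.const_mul _).integrableOn) measurableSet_Ioi
    intro x hx
    have hx' : u < x := hx
    have h1 : 1 ≤ u⁻¹ * x := by
      rw [← div_eq_inv_mul, le_div_iff₀ hu]
      linarith
    nlinarith [Real.exp_pos (-x^2/2)]
  calc ∫ x in Ioi u, Real.exp (-x^2/2) ≤ ∫ x in Ioi u, u⁻¹ * (x * Real.exp (-x^2/2)) := key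
    _ = u⁻¹ * ∫ x in Ioi u, x * Real.exp (-x^2/2) := integral_const_mul _ _
    _ = u⁻¹ * Real.exp (-u^2/2) := by rw [aux_I1]

lemma aux_scale {v : ℝ≥0} (hv : v ≠ 0) (a : ℝ) :
    ((gaussianReal 0 v) (Ioi a)).toReal = stdGaussianSurvival (a / Real.sqrt v) := by
  have hvpos : (0:ℝ) < Real.sqrt v := Real.sqrt_pos.mpr (by positivity)
  rw [← aux_map_v v, Measure.map_apply (by fun_prop) measurableSet_Ioi]
  rw [show (fun x : ℝ => Real.sqrt v * x) ⁻¹' Ioi a = Ioi (a / Real.sqrt v) from ?_]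
  · rfl
  · ext x
    simp only [mem_preimage, mem_Ioi]
    rw [div_lt_iff₀ hvpos, mul_comm]

/-- Gaussian cluster tail bound: if `(Z_1,…,Z_m)` is a centered Gaussian vector with
common variance `σ²` and all pairwise correlations at most `ϑ < 1`, then for `t > 0`,
`P(Z_r > t ∀r) ≤ Φ̄(√(m/(1+(m−1)ϑ)) t/σ)`, and by Mills' ratio the latter is at most
`(σ√(1+(m−1)ϑ)/(√(2πm) t)) exp(−m t²/(2σ²(1+(m−1)ϑ)))`. -/
theorem stmt_11 {Ω : Type*} [MeasureSpace Ω] [IsProbabilityMeasure (ℙ : Measure Ω)]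
    {m : ℕ} (hm : 1 ≤ m) (Z : Fin m → Ω → ℝ) (hmeas : ∀ r, Measurable (Z r))
    (σ ϑ : ℝ) (hσ : 0 < σ) (hϑ0 : 0 ≤ ϑ) (hϑ1 : ϑ < 1)
    (hGauss : ∀ c : Fin m → ℝ, ∃ v : NNReal,
      Measure.map (fun ω => ∑ r, c r * Z r ω) ℙ = gaussianReal 0 v)
    (hcent : ∀ r, ∫ ω, Z r ω ∂ℙ = 0)
    (hvar : ∀ r, ∫ ω, (Z r ω) ^ 2 ∂ℙ = σ ^ 2)
    (hcorr : ∀ r r' : Fin m, r ≠ r' → ∫ ω, Z r ω * Z r' ω ∂ℙ ≤ ϑ * σ ^ 2)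
    (t : ℝ) (ht : 0 < t) :
    (ℙ {ω | ∀ r, t < Z r ω}).toReal
        ≤ stdGaussianSurvival (Real.sqrt ((m : ℝ) / (1 + ((m : ℝ) - 1) * ϑ)) * t / σ) ∧
    stdGaussianSurvival (Real.sqrt ((m : ℝ) / (1 + ((m : ℝ) - 1) * ϑ)) * t / σ)
        ≤ σ * Real.sqrt (1 + ((m : ℝ) - 1) * ϑ) / (Real.sqrt (2 * Real.pi * (m : ℝ)) * t)
          * Real.exp (-((m : ℝ) * t ^ 2) / (2 * σ ^ 2 * (1 + ((m : ℝ) - 1) * ϑ))) := by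
  classical
  have hm1 : (1:ℝ) ≤ (m:ℝ) := by exact_mod_cast hm
  set θ : ℝ := 1 + ((m:ℝ) - 1) * ϑ with hθdef
  have hθpos : 0 < θ := by nlinarith
  have hmpos : (0:ℝ) < (m:ℝ) := by linarith
  set S : Ω → ℝ := fun ω => ∑ r, Z r ω with hSdef
  have hSm : Measurable S := Finset.measurable_sum _ (fun r _ => hmeas r)
  obtain ⟨v, hv⟩ := hGauss (fun _ => 1)
  simp only [one_mul] at hv
  have hZr : ∀ r, ∃ vr : ℝ≥0, Measure.map (Z r) ℙ = gaussianReal 0 vr := by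
    intro r
    obtain ⟨vr, hvr⟩ := hGauss (fun r' => if r' = r then 1 else 0)
    refine ⟨vr, ?_⟩
    rw [← hvr]
    congr 1
    ext ω
    simp
  have hint2 : ∀ r, Integrable (fun ω => (Z r ω)^2) ℙ := by
    intro r
    obtain ⟨vr, hvr⟩ := hZr r
    have h1 : Integrable (fun x : ℝ => x^2) (Measure.map (Z r) ℙ) := by
      rw [hvr]; exact aux_momv_int vr
    exact (integrable_map_measure (by fun_prop) (hmeas r).aemeasurable).mp h1
  have hprod : ∀ r r', Integrable (fun ω => Z r ω * Z r' ω) ℙ := by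
    intro r r'
    apply Integrable.mono' (((hint2 r).add (hint2 r')).div_const 2)
      ((hmeas r).mul (hmeas r')).aestronglyMeasurable
    filter_upwards with ω
    rw [Real.norm_eq_abs, Pi.mul_apply, abs_mul]
    simp only [Pi.add_apply]
    nlinarith [sq_abs (Z r ω), sq_abs (Z r' ω), sq_nonneg (|Z r ω| - |Z r' ω|)]
  have hS2 : ∫ ω, (S ω)^2 ∂ℙ = (v:ℝ) := by
    have h1 : ∫ x : ℝ, x^2 ∂(Measure.map S ℙ) = ∫ ω, (S ω)^2 ∂ℙ :=
      integral_map hSm.aemeasurable (by fun_prop)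
    rw [← h1, hv, aux_momv]
  have hexp : ∫ ω, (S ω)^2 ∂ℙ = ∑ r, ∑ r', ∫ ω, Z r ω * Z r' ω ∂ℙ := by
    have h1 : (fun ω => (S ω)^2) = fun ω => ∑ r, ∑ r', Z r ω * Z r' ω := by
      ext ω; rw [sq, Finset.sum_mul_sum]
    rw [h1, integral_finset_sum _ (fun r _ => integrable_finset_sum _ (fun r' _ => hprod r r'))]
    exact Finset.sum_congr rfl fun r _ => integral_finset_sum _ (fun r' _ => hprod r r')
  have hvV : (v:ℝ) ≤ (m:ℝ) * σ^2 * θ := by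
    rw [← hS2, hexp]
    have hbound : ∀ r : Fin m, ∑ r', ∫ ω, Z r ω * Z r' ω ∂ℙ
        ≤ σ^2 + ((m:ℝ)-1) * (ϑ * σ^2) := by
      intro r
      have h1 : ∀ r' : Fin m, ∫ ω, Z r ω * Z r' ω ∂ℙ
          ≤ ϑ * σ^2 + (if r' = r then σ^2 - ϑ*σ^2 else 0) := by
        intro r'
        by_cases h : r' = r
        · subst h
          have h2 : ∫ ω, Z r' ω * Z r' ω ∂ℙ = σ^2 := by
            rw [← hvar r']; congr 1 with ω; ring
          rw [h2, if_pos rfl]; linarith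
        · simp only [if_neg h, add_zero]
          exact hcorr r r' (fun hrr => h hrr.symm)
      calc ∑ r', ∫ ω, Z r ω * Z r' ω ∂ℙ
          ≤ ∑ r' : Fin m, (ϑ * σ^2 + (if r' = r then σ^2 - ϑ*σ^2 else 0)) :=
            Finset.sum_le_sum fun r' _ => h1 r'
        _ = σ^2 + ((m:ℝ)-1) * (ϑ * σ^2) := by
            rw [Finset.sum_add_distrib, Finset.sum_const,
              Finset.sum_ite_eq' Finset.univ r (fun _ => σ^2 - ϑ*σ^2)]
            simp only [Finset.card_univ, Fintype.card_fin, Finset.mem_univ, if_pos,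
              nsmul_eq_mul]
            ring
    calc ∑ r, ∑ r', ∫ ω, Z r ω * Z r' ω ∂ℙ
        ≤ ∑ _r : Fin m, (σ^2 + ((m:ℝ)-1)*(ϑ*σ^2)) := Finset.sum_le_sum fun r _ => hbound r
      _ = (m:ℝ) * σ^2 * θ := by
          rw [Finset.sum_const, Finset.card_univ, Fintype.card_fin, nsmul_eq_mul]
          rw [hθdef]; ring
  have hsub : {ω | ∀ r, t < Z r ω} ⊆ S ⁻¹' (Set.Ioi ((m:ℝ)*t)) := by
    intro ω hω
    simp only [Set.mem_preimage, Set.mem_Ioi]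
    have h1 : ∑ _r : Fin m, t < ∑ r, Z r ω :=
      Finset.sum_lt_sum_of_nonempty (Finset.univ_nonempty_iff.mpr ⟨⟨0, hm⟩⟩) (fun r _ => hω r)
    simpa [Finset.sum_const, Finset.card_univ, nsmul_eq_mul] using h1
  have hmt : ℙ {ω | ∀ r, t < Z r ω} ≤ (gaussianReal 0 v) (Set.Ioi ((m:ℝ)*t)) := by
    rw [← hv, Measure.map_apply hSm measurableSet_Ioi]
    exact measure_mono hsub
  have hmθ : (0:ℝ) ≤ (m:ℝ)/θ := by positivity
  have husqrt : Real.sqrt ((m:ℝ)/θ) = Real.sqrt m / Real.sqrt θ :=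
    Real.sqrt_div (by positivity) θ
  have hθs : (0:ℝ) < Real.sqrt θ := Real.sqrt_pos.mpr hθpos
  have hms : (0:ℝ) < Real.sqrt m := Real.sqrt_pos.mpr hmpos
  have hupos : 0 < Real.sqrt ((m:ℝ)/θ) * t / σ := by
    apply div_pos (mul_pos (Real.sqrt_pos.mpr (by positivity)) ht) hσ
  constructor
  · by_cases hv0 : v = 0
    · have hz : (gaussianReal 0 v) (Set.Ioi ((m:ℝ)*t)) = 0 := by
        rw [hv0, gaussianReal_zero_var, Measure.dirac_apply' _ measurableSet_Ioi]
        simp only [Set.indicator_apply, Set.mem_Ioi]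
        rw [if_neg (by push_neg; positivity)]
      have h0 : ℙ {ω | ∀ r, t < Z r ω} = 0 := le_antisymm (hz ▸ hmt) (zero_le)
      rw [h0]
      simpa using aux_surv_nonneg _
    · have hvpos : (0:ℝ) < (v:ℝ) := by positivity
      calc (ℙ {ω | ∀ r, t < Z r ω}).toReal
          ≤ ((gaussianReal 0 v) (Set.Ioi ((m:ℝ)*t))).toReal :=
            ENNReal.toReal_mono (measure_ne_top _ _) hmt
        _ = stdGaussianSurvival ((m:ℝ)*t / Real.sqrt v) := aux_scale hv0 _
        _ ≤ stdGaussianSurvival (Real.sqrt ((m:ℝ)/θ) * t / σ) := by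
            apply aux_surv_mono
            have hsv : Real.sqrt v ≤ σ * (Real.sqrt m * Real.sqrt θ) := by
              have he : Real.sqrt ((m:ℝ)*σ^2*θ) = σ * (Real.sqrt m * Real.sqrt θ) := by
                rw [show (m:ℝ)*σ^2*θ = σ^2 * ((m:ℝ)*θ) by ring,
                  Real.sqrt_mul (sq_nonneg σ), Real.sqrt_sq hσ.le,
                  Real.sqrt_mul hmpos.le]
              rw [← he]
              exact Real.sqrt_le_sqrt hvV
            rw [husqrt, div_le_div_iff₀ hσ (Real.sqrt_pos.mpr hvpos)]
            calc Real.sqrt m / Real.sqrt θ * t * Real.sqrt v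
                ≤ Real.sqrt m / Real.sqrt θ * t * (σ * (Real.sqrt m * Real.sqrt θ)) := by
                  apply mul_le_mul_of_nonneg_left hsv (by positivity)
              _ = (Real.sqrt m * Real.sqrt m)*(Real.sqrt θ * (Real.sqrt θ)⁻¹)*t*σ := by
                  ring
              _ = (m:ℝ) * t * σ := by
                  rw [Real.mul_self_sqrt hmpos.le, mul_inv_cancel₀ hθs.ne']
                  ring
  · have hB := aux_mills hupos
    refine hB.trans (le_of_eq ?_)
    have hu2 : (Real.sqrt ((m:ℝ)/θ) * t / σ)^2 = (m:ℝ)*t^2/(σ^2*θ) := by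
      rw [div_pow, mul_pow, Real.sq_sqrt hmθ]
      field_simp
    rw [hu2]
    have h2πm : Real.sqrt (2*Real.pi*(m:ℝ)) = Real.sqrt (2*Real.pi) * Real.sqrt m :=
      Real.sqrt_mul (by positivity) _
    rw [h2πm, husqrt]
    rw [show -((m:ℝ)*t^2/(σ^2*θ))/2 = -((m:ℝ)*t^2)/(2*σ^2*θ) by field_simp]
    rw [← mul_assoc]
    congr 1
    field_simp
end

section
/- Let A_1, …, A_s be events such that for every nonempty L ⊆ {1,…,s}, |P(⋂_{j∈L} A_j) − ∏_{j∈L} P(A_j)| ≤ (|L| − 1)·α for some α ≥ 0, and suppose P(A_j) = 1 − q for all j. Then |P(⋂_{j=1}^s A_j^c) − q^s| ≤ s·2^{s-1}·α. -/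
open MeasureTheory ProbabilityTheory

lemma aux_ie {Ω ι : Type*} [MeasurableSpace Ω] [DecidableEq ι]
    (A : ι → Set Ω) (hA : ∀ j, MeasurableSet (A j)) :
    ∀ (I : Finset ι) (μ : Measure Ω), IsFiniteMeasure μ →
      (μ (⋂ j ∈ I, (A j)ᶜ)).toReal
        = ∑ L ∈ I.powerset, (-1 : ℝ) ^ L.card * (μ (⋂ j ∈ L, A j)).toReal := by
  intro I
  induction I using Finset.induction_on with
  | empty => intro μ _; simp
  | @insert a I ha ih =>
    intro μ hμ
    have hB : MeasurableSet (⋂ j ∈ I, (A j)ᶜ) :=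
      MeasurableSet.biInter I.countable_toSet fun j _ => (hA j).compl
    set B := ⋂ j ∈ I, (A j)ᶜ with hBdef
    have hsplit : μ (B ∩ A a) + μ (B \ A a) = μ B := measure_inter_add_diff B (hA a)
    have h1 : μ (B ∩ A a) ≠ ⊤ := measure_ne_top μ _
    have h2 : μ (B \ A a) ≠ ⊤ := measure_ne_top μ _
    have hsplit' : (μ (B ∩ A a)).toReal + (μ (B \ A a)).toReal = (μ B).toReal := by
      rw [← ENNReal.toReal_add h1 h2, hsplit]
    have hLHS : (⋂ j ∈ insert a I, (A j)ᶜ) = B \ A a := by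
      rw [Finset.set_biInter_insert, Set.diff_eq, Set.inter_comm]
    have hrestr := ih (μ.restrict (A a)) (by infer_instance)
    have hrestr' : (μ (B ∩ A a)).toReal
        = ∑ L ∈ I.powerset, (-1 : ℝ) ^ L.card * (μ (⋂ j ∈ insert a L, A j)).toReal := by
      rw [← Measure.restrict_apply' (hA a), hrestr]
      refine Finset.sum_congr rfl fun L hL => ?_
      rw [Measure.restrict_apply' (hA a), Finset.set_biInter_insert, Set.inter_comm]
    rw [hLHS, eq_sub_of_add_eq' hsplit', ih μ ‹_›, hrestr',
      Finset.sum_powerset_insert ha]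
    have hcard : ∀ L ∈ I.powerset, ((-1 : ℝ) ^ (insert a L).card *
        (μ (⋂ j ∈ insert a L, A j)).toReal)
        = -((-1 : ℝ) ^ L.card * (μ (⋂ j ∈ insert a L, A j)).toReal) := by
      intro L hL
      have : a ∉ L := fun h => ha (Finset.mem_powerset.mp hL h)
      rw [Finset.card_insert_of_notMem this, pow_succ]
      ring
    rw [Finset.sum_congr rfl hcard, Finset.sum_neg_distrib]
    ring

lemma aux_sum_card {ι : Type*} [DecidableEq ι] (I : Finset ι) :
    ∑ L ∈ I.powerset, L.card = I.card * 2 ^ (I.card - 1) := by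
  induction I using Finset.induction_on with
  | empty => simp
  | @insert a I ha ih =>
    rw [Finset.sum_powerset_insert ha]
    have hc : ∀ L ∈ I.powerset, (insert a L).card = L.card + 1 := by
      intro L hL
      exact Finset.card_insert_of_notMem fun h => ha (Finset.mem_powerset.mp hL h)
    rw [Finset.sum_congr rfl hc, Finset.sum_add_distrib, ih, Finset.sum_const,
      Finset.card_powerset, Finset.card_insert_of_notMem ha]
    rcases Nat.eq_zero_or_pos I.card with h | h
    · simp [h]
    · obtain ⟨n, hn⟩ : ∃ n, I.card = n + 1 := ⟨I.card - 1, (Nat.succ_pred_eq_of_pos h).symm⟩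
      rw [hn]
      simp [pow_succ]
      ring

/-- Approximate independence of block events: if `P(A_j) = 1 − q` for all `j` and every
sub-collection satisfies `|P(⋂_{j∈L} A_j) − ∏_{j∈L} P(A_j)| ≤ (|L|−1)α`, then
`|P(⋂_j A_jᶜ) − q^s| ≤ s 2^{s−1} α`. -/
theorem stmt_16 {Ω : Type*} [MeasureSpace Ω] [IsProbabilityMeasure (ℙ : Measure Ω)]
    {s : ℕ} (A : Fin s → Set Ω) (hA : ∀ j, MeasurableSet (A j))
    (q α : ℝ) (hα : 0 ≤ α)
    (hq : ∀ j, (ℙ (A j)).toReal = 1 - q)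
    (happrox : ∀ L : Finset (Fin s), L.Nonempty →
      |(ℙ (⋂ j ∈ L, A j)).toReal - ∏ j ∈ L, (ℙ (A j)).toReal|
        ≤ ((L.card : ℝ) - 1) * α) :
    |(ℙ (⋂ j, (A j)ᶜ)).toReal - q ^ s| ≤ (s : ℝ) * 2 ^ (s - 1) * α := by
  classical
  have hIE : (ℙ (⋂ j, (A j)ᶜ)).toReal
      = ∑ L ∈ (Finset.univ : Finset (Fin s)).powerset,
          (-1 : ℝ) ^ L.card * (ℙ (⋂ j ∈ L, A j)).toReal := by
    rw [show (⋂ j, (A j)ᶜ) = ⋂ j ∈ (Finset.univ : Finset (Fin s)), (A j)ᶜ by simp]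
    exact aux_ie A hA Finset.univ ℙ (by infer_instance)
  have hq' : q ^ s = ∑ L ∈ (Finset.univ : Finset (Fin s)).powerset,
      (-1 : ℝ) ^ L.card * (1 - q) ^ L.card := by
    have := Finset.sum_pow_mul_eq_add_pow (-(1 - q)) (1 : ℝ) (Finset.univ : Finset (Fin s))
    simp only [one_pow, mul_one, Finset.card_univ, Fintype.card_fin] at this
    rw [show q = -(1 - q) + 1 by ring, ← this]
    refine Finset.sum_congr rfl fun L hL => ?_
    rw [neg_pow]
    ring
  rw [hIE, hq', ← Finset.sum_sub_distrib]
  have hbound : ∀ L ∈ (Finset.univ : Finset (Fin s)).powerset,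
      |(-1 : ℝ) ^ L.card * (ℙ (⋂ j ∈ L, A j)).toReal
        - (-1 : ℝ) ^ L.card * (1 - q) ^ L.card| ≤ (L.card : ℝ) * α := by
    intro L _
    rw [← mul_sub, abs_mul, abs_pow, abs_neg, abs_one, one_pow, one_mul]
    rcases L.eq_empty_or_nonempty with rfl | hL
    · simp
    · have hprod : ∏ j ∈ L, (ℙ (A j)).toReal = (1 - q) ^ L.card := by
        rw [Finset.prod_congr rfl fun j _ => hq j, Finset.prod_const]
      calc |(ℙ (⋂ j ∈ L, A j)).toReal - (1 - q) ^ L.card|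
          ≤ ((L.card : ℝ) - 1) * α := by rw [← hprod]; exact happrox L hL
        _ ≤ (L.card : ℝ) * α := by
            apply mul_le_mul_of_nonneg_right _ hα
            linarith
  calc |∑ L ∈ (Finset.univ : Finset (Fin s)).powerset,
        ((-1 : ℝ) ^ L.card * (ℙ (⋂ j ∈ L, A j)).toReal
          - (-1 : ℝ) ^ L.card * (1 - q) ^ L.card)|
      ≤ ∑ L ∈ (Finset.univ : Finset (Fin s)).powerset, (L.card : ℝ) * α :=
        (Finset.abs_sum_le_sum_abs _ _).trans (Finset.sum_le_sum hbound)
    _ = (s : ℝ) * 2 ^ (s - 1) * α := by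
        rw [← Finset.sum_mul, ← Nat.cast_sum, aux_sum_card]
        simp [Finset.card_univ]
end
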